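/- Let S be a symmetric positive semidefinite d×d real matrix and Σ a symmetric positive definite d×d real matrix. Then √λ_min(Σ) · S^{1/2} ⪯ (S^{1/2} Σ S^{1/2})^{1/2} ⪯ √λ_max(Σ) · S^{1/2} in the Löwner order. -/

import Mathlib

open Matrix BigOperators Finset
open scoped Classical

/-- Unique positive semidefinite square root of a positive semidefinite matrix
(and junk value `0` on other matrices). -/
noncomputable def msqrt {d : ℕ} (M : Matrix (Fin d) (Fin d) ℝ) :
    Matrix (Fin d) (Fin d) ℝ :=
  if h : M.PosSemidef then
    h.1.eigenvectorUnitary.1 * diagonal (fun i => Real.sqrt (h.1.eigenvalues i)) *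
      (star h.1.eigenvectorUnitary : Matrix (Fin d) (Fin d) ℝ) else 0

/-- Smallest eigenvalue of a symmetric matrix (junk value `0` otherwise). -/
noncomputable def lmin {d : ℕ} (M : Matrix (Fin d) (Fin d) ℝ) : ℝ :=
  if h : M.IsHermitian then ⨅ i, h.eigenvalues i else 0

/-- Largest eigenvalue of a symmetric matrix (junk value `0` otherwise). -/
noncomputable def lmax {d : ℕ} (M : Matrix (Fin d) (Fin d) ℝ) : ℝ :=
  if h : M.IsHermitian then ⨆ i, h.eigenvalues i else 0

/-- Squared Bures–Wasserstein distance. -/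
noncomputable def W2sq {d : ℕ} (A B : Matrix (Fin d) (Fin d) ℝ) : ℝ :=
  A.trace + B.trace - 2 * (msqrt (msqrt A * B * msqrt A)).trace

/-- The conditional barycenter objective `F`. -/
noncomputable def Fobj {d n : ℕ} (Sig : Fin n → Matrix (Fin d) (Fin d) ℝ)
    (lam : Fin n → ℝ) (S : Matrix (Fin d) (Fin d) ℝ) : ℝ :=
  ∑ k, lam k * W2sq S (Sig k)

/-- Geometric mean `GM(S⁻¹, Σ) = S^{-1/2} (S^{1/2} Σ S^{1/2})^{1/2} S^{-1/2}`. -/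
noncomputable def GMinv {d : ℕ} (S Sigma : Matrix (Fin d) (Fin d) ℝ) :
    Matrix (Fin d) (Fin d) ℝ :=
  (msqrt S)⁻¹ * msqrt (msqrt S * Sigma * msqrt S) * (msqrt S)⁻¹

/-- The Spectral Dominance of Positive Weights condition. -/
def SDPW {d n : ℕ} (Sig : Fin n → Matrix (Fin d) (Fin d) ℝ) (lam : Fin n → ℝ) : Prop :=
  ∑ j ∈ Finset.univ.filter (fun k => lam k < 0), (-lam j) * Real.sqrt (lmax (Sig j))
    < ∑ i ∈ Finset.univ.filter (fun k => 0 < lam k), lam i * Real.sqrt (lmin (Sig i))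


section Helpers
open Matrix

lemma msqrt_psd {d : ℕ} {M : Matrix (Fin d) (Fin d) ℝ} (hM : M.PosSemidef) :
    (msqrt M).PosSemidef := by
  rw [msqrt, dif_pos hM]
  have := (posSemidef_diagonal_iff.mpr fun i => Real.sqrt_nonneg (hM.1.eigenvalues i)).mul_mul_conjTranspose_same
    (hM.1.eigenvectorUnitary : Matrix (Fin d) (Fin d) ℝ)
  exact this

lemma msqrt_mul_self {d : ℕ} {M : Matrix (Fin d) (Fin d) ℝ} (hM : M.PosSemidef) :
    msqrt M * msqrt M = M := by
  rw [msqrt, dif_pos hM]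
  have hU : (star hM.1.eigenvectorUnitary : Matrix (Fin d) (Fin d) ℝ) *
      (hM.1.eigenvectorUnitary : Matrix (Fin d) (Fin d) ℝ) = 1 :=
    (Matrix.mem_unitaryGroup_iff').mp hM.1.eigenvectorUnitary.2
  conv_rhs => rw [hM.1.spectral_theorem, Unitary.conjStarAlgAut_apply]
  simp only [Matrix.mul_assoc]
  rw [← Matrix.mul_assoc _ (hM.1.eigenvectorUnitary : Matrix (Fin d) (Fin d) ℝ), hU,
    Matrix.one_mul, ← Matrix.mul_assoc (diagonal _), diagonal_mul_diagonal]
  congr 3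
  funext i
  simp [Real.mul_self_sqrt (hM.eigenvalues_nonneg i)]

lemma sq_psd_mono {d : ℕ} {A B : Matrix (Fin d) (Fin d) ℝ}
    (hA : A.PosSemidef) (hB : B.PosSemidef) (h : (B*B - A*A).PosSemidef) :
    (B - A).PosSemidef := by
  have hC : (B - A).IsHermitian := hB.1.sub hA.1
  refine hC.posSemidef_iff_eigenvalues_nonneg.mpr (Pi.le_def.mpr fun i => ?_)
  by_contra hneg
  push_neg at hneg
  set μ := hC.eigenvalues i with hμdef
  set v : Fin d → ℝ := ⇑(hC.eigenvectorBasis i) with hvdef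
  have hv : (B - A) *ᵥ v = μ • v := by
    have := hC.mulVec_eigenvectorBasis i
    simpa [hvdef, hμdef] using this
  have hvne : v ≠ 0 := by
    have := hC.eigenvectorBasis.orthonormal.ne_zero i
    intro hcon
    apply this
    ext j
    exact congrFun hcon j
  have hvv : 0 < v ⬝ᵥ v := by
    have h1 : 0 ≤ v ⬝ᵥ v := Finset.sum_nonneg fun j _ => mul_self_nonneg _
    rcases h1.lt_or_eq with h' | h'
    · exact h'
    · exact absurd ((dotProduct_self_eq_zero).mp h'.symm) hvne
  set a : Fin d → ℝ := A *ᵥ v with hadef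
  set b : Fin d → ℝ := B *ᵥ v with hbdef
  have hab : a = b - μ • v := by
    rw [hadef, hbdef, ← hv, sub_mulVec]; abel
  -- quadratic form facts
  have hq : 0 ≤ v ⬝ᵥ ((B*B - A*A) *ᵥ v) := by
    have := h.dotProduct_mulVec_nonneg v
    simpa using this
  have hvb : 0 ≤ v ⬝ᵥ b := by
    have := hB.dotProduct_mulVec_nonneg v
    simpa [hbdef] using this
  -- v ⬝ (A*A) v = a ⬝ a, v ⬝ (B*B) v = b ⬝ b
  have hAsym : Aᵀ = A := by
    have := hA.1; rwa [Matrix.IsHermitian, conjTranspose_eq_transpose_of_trivial] at this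
  have hBsym : Bᵀ = B := by
    have := hB.1; rwa [Matrix.IsHermitian, conjTranspose_eq_transpose_of_trivial] at this
  have hvAA : v ⬝ᵥ ((A*A) *ᵥ v) = a ⬝ᵥ a := by
    rw [← mulVec_mulVec, dotProduct_mulVec, ← mulVec_transpose, hAsym, ← hadef]
  have hvBB : v ⬝ᵥ ((B*B) *ᵥ v) = b ⬝ᵥ b := by
    rw [← mulVec_mulVec, dotProduct_mulVec, ← mulVec_transpose, hBsym, ← hbdef]
  have expand : a ⬝ᵥ a = b ⬝ᵥ b - 2*μ*(v ⬝ᵥ b) + μ^2*(v ⬝ᵥ v) := by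
    rw [hab]
    simp [dotProduct_sub, sub_dotProduct, dotProduct_smul, smul_dotProduct, dotProduct_comm v b]
    ring
  rw [sub_mulVec, dotProduct_sub, hvAA, hvBB] at hq
  nlinarith [mul_nonneg hvb (neg_nonneg.2 hneg.le), mul_pos hvv (mul_self_pos.2 hneg.ne)]


lemma sub_smul_one_psd {d : ℕ} {M : Matrix (Fin d) (Fin d) ℝ} (hM : M.IsHermitian)
    {c : ℝ} (h : ∀ i, c ≤ hM.eigenvalues i) : (M - c • 1).PosSemidef := by
  have hU : (hM.eigenvectorUnitary : Matrix (Fin d) (Fin d) ℝ) *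
      (star hM.eigenvectorUnitary : Matrix (Fin d) (Fin d) ℝ) = 1 :=
    (Matrix.mem_unitaryGroup_iff).mp hM.eigenvectorUnitary.2
  have key : M - c • 1 =
      (hM.eigenvectorUnitary : Matrix (Fin d) (Fin d) ℝ) *
        diagonal (fun i => hM.eigenvalues i - c) *
        (star hM.eigenvectorUnitary : Matrix (Fin d) (Fin d) ℝ) := by
    have hd : diagonal (fun i => hM.eigenvalues i - c)
        = diagonal (RCLike.ofReal ∘ hM.eigenvalues) - c • (1 : Matrix (Fin d) (Fin d) ℝ) := by
      simp [← diagonal_one, diagonal_sub, smul_eq_diagonal_mul]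
    rw [hd, Matrix.mul_sub, Matrix.sub_mul, ← Unitary.conjStarAlgAut_apply (S := ℝ) hM.eigenvectorUnitary (diagonal (RCLike.ofReal ∘ hM.eigenvalues)), ← hM.spectral_theorem]
    congr 1
    rw [Matrix.mul_smul, Matrix.smul_mul, mul_one, hU]
  rw [key]
  exact (posSemidef_diagonal_iff.mpr fun i => sub_nonneg.2 (h i)).mul_mul_conjTranspose_same _

lemma smul_one_sub_psd {d : ℕ} {M : Matrix (Fin d) (Fin d) ℝ} (hM : M.IsHermitian)
    {c : ℝ} (h : ∀ i, hM.eigenvalues i ≤ c) : (c • 1 - M).PosSemidef := by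
  have hU : (hM.eigenvectorUnitary : Matrix (Fin d) (Fin d) ℝ) *
      (star hM.eigenvectorUnitary : Matrix (Fin d) (Fin d) ℝ) = 1 :=
    (Matrix.mem_unitaryGroup_iff).mp hM.eigenvectorUnitary.2
  have key : c • 1 - M =
      (hM.eigenvectorUnitary : Matrix (Fin d) (Fin d) ℝ) *
        diagonal (fun i => c - hM.eigenvalues i) *
        (star hM.eigenvectorUnitary : Matrix (Fin d) (Fin d) ℝ) := by
    have hd : diagonal (fun i => c - hM.eigenvalues i)
        = c • (1 : Matrix (Fin d) (Fin d) ℝ) - diagonal (RCLike.ofReal ∘ hM.eigenvalues) := by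
      simp [← diagonal_one, diagonal_sub, smul_eq_diagonal_mul]
    rw [hd, Matrix.mul_sub, Matrix.sub_mul, ← Unitary.conjStarAlgAut_apply (S := ℝ) hM.eigenvectorUnitary (diagonal (RCLike.ofReal ∘ hM.eigenvalues)), ← hM.spectral_theorem]
    congr 1
    rw [Matrix.mul_smul, Matrix.smul_mul, mul_one, hU]
  rw [key]
  exact (posSemidef_diagonal_iff.mpr fun i => sub_nonneg.2 (h i)).mul_mul_conjTranspose_same _

-- psd of nonneg scalar smul
lemma psd_smul {d : ℕ} {M : Matrix (Fin d) (Fin d) ℝ} (hM : M.PosSemidef) {c : ℝ}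
    (hc : 0 ≤ c) : (c • M).PosSemidef := by
  refine PosSemidef.of_dotProduct_mulVec_nonneg ?_ ?_
  · unfold Matrix.IsHermitian
    rw [conjTranspose_smul, star_trivial, hM.1]
  · intro x
    have h0 := hM.dotProduct_mulVec_nonneg x
    rw [smul_mulVec, dotProduct_smul, smul_eq_mul]
    exact mul_nonneg hc h0

end Helpers

/-- `√λmin(Σ) • S^(1/2) ⪯ (S^(1/2) Σ S^(1/2))^(1/2) ⪯ √λmax(Σ) • S^(1/2)`. -/
theorem stmt1 {d : ℕ} (S Sigma : Matrix (Fin d) (Fin d) ℝ)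
    (hS : S.PosSemidef) (hSigma : Sigma.PosDef) :
    (msqrt (msqrt S * Sigma * msqrt S) - Real.sqrt (lmin Sigma) • msqrt S).PosSemidef ∧
    (Real.sqrt (lmax Sigma) • msqrt S - msqrt (msqrt S * Sigma * msqrt S)).PosSemidef := by
  set R := msqrt S with hRdef
  have hR : R.PosSemidef := by
    rw [hRdef]; exact msqrt_psd hS
  have hRH : Rᴴ = R := hR.1
  have hP : (R * Sigma * R).PosSemidef := by
    have := hSigma.posSemidef.mul_mul_conjTranspose_same R
    rwa [hRH] at this
  have hQpsd : (msqrt (R * Sigma * R)).PosSemidef := by exact msqrt_psd hP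
  have hQsq : msqrt (R * Sigma * R) * msqrt (R * Sigma * R) = R * Sigma * R := by
    exact msqrt_mul_self hP
  have hherm : Sigma.IsHermitian := hSigma.1
  have hlminr : lmin Sigma = ⨅ i, hherm.eigenvalues i := by rw [lmin, dif_pos hherm]
  have hlmaxr : lmax Sigma = ⨆ i, hherm.eigenvalues i := by rw [lmax, dif_pos hherm]
  have hlmin_nonneg : 0 ≤ lmin Sigma := by
    rw [hlminr]
    rcases isEmpty_or_nonempty (Fin d) with he | hne
    · simp [Real.iInf_of_isEmpty]
    · exact le_ciInf fun i => (hSigma.eigenvalues_pos i).le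
  have hlmin_le : ∀ i, lmin Sigma ≤ hherm.eigenvalues i := fun i => by
    rw [hlminr]; exact ciInf_le (Set.Finite.bddBelow (Set.finite_range _)) i
  have hle_lmax : ∀ i, hherm.eigenvalues i ≤ lmax Sigma := fun i => by
    rw [hlmaxr]; exact le_ciSup (Set.Finite.bddAbove (Set.finite_range _)) i
  have hlmax_nonneg : 0 ≤ lmax Sigma := by
    rcases isEmpty_or_nonempty (Fin d) with he | hne
    · rw [hlmaxr]; simp [Real.iSup_of_isEmpty]
    · exact (hSigma.eigenvalues_pos (Classical.arbitrary _)).le.trans (hle_lmax _)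
  constructor
  · apply sq_psd_mono (psd_smul hR (Real.sqrt_nonneg _)) hQpsd
    have hAA : (Real.sqrt (lmin Sigma) • R) * (Real.sqrt (lmin Sigma) • R)
        = lmin Sigma • (R * R) := by
      rw [smul_mul_assoc, mul_smul_comm, smul_smul, Real.mul_self_sqrt hlmin_nonneg]
    rw [hQsq, hAA]
    have hkey := (sub_smul_one_psd hherm hlmin_le).mul_mul_conjTranspose_same R
    rw [hRH] at hkey
    convert hkey using 1
    simp only [Matrix.mul_sub, Matrix.sub_mul, mul_smul_comm, smul_mul_assoc,
      Matrix.mul_one, Matrix.one_mul]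
  · apply sq_psd_mono hQpsd (psd_smul hR (Real.sqrt_nonneg _))
    have hAA : (Real.sqrt (lmax Sigma) • R) * (Real.sqrt (lmax Sigma) • R)
        = lmax Sigma • (R * R) := by
      rw [smul_mul_assoc, mul_smul_comm, smul_smul, Real.mul_self_sqrt hlmax_nonneg]
    rw [hQsq, hAA]
    have hkey := (smul_one_sub_psd hherm hle_lmax).mul_mul_conjTranspose_same R
    rw [hRH] at hkey
    convert hkey using 1
    simp only [Matrix.mul_sub, Matrix.sub_mul, mul_smul_comm, smul_mul_assoc,
      Matrix.mul_one, Matrix.one_mul]
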